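/- Let L = p^{-1}Z_p ⊕ Z_p ⊕ Z_p ⊕ Z_p with the standard symplectic pairing. For every primitive element x ∈ L of type (II), there exists a primitive element y ∈ L of type (II) with ⟨x,y⟩ = 1. -/

import Mathlib

/-- The paramodular lattice `L = p⁻¹ℤ_p ⊕ ℤ_p ⊕ ℤ_p ⊕ ℤ_p ⊆ ℚ_p⁴` is identified with `ℤ_p⁴`
via `(a,b,c,d) ↦ (p⁻¹a, b, c, d)`.  Under this identification the standard symplectic pairing
`⟨x,y⟩ = x₁y₄ + x₂y₃ − x₃y₂ − x₄y₁` becomes the following `ℚ_p`-valued pairing on `ℤ_p⁴`. -/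
noncomputable def spPara (p : ℕ) [Fact p.Prime] (u v : Fin 4 → ℤ_[p]) : ℚ_[p] :=
  ((u 0 * v 3 : ℤ_[p]) : ℚ_[p]) / (p : ℚ_[p]) + ((u 1 * v 2 : ℤ_[p]) : ℚ_[p])
    - ((u 2 * v 1 : ℤ_[p]) : ℚ_[p]) - ((u 3 * v 0 : ℤ_[p]) : ℚ_[p]) / (p : ℚ_[p])

/-- `x ∈ L` is primitive if `x ∉ pL`. -/
def ParaPrimitive (p : ℕ) [Fact p.Prime] (x : Fin 4 → ℤ_[p]) : Prop :=
  ¬ ∀ i, (p : ℤ_[p]) ∣ x i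

/-- A primitive element of type (I): `⟨x,y⟩ ∈ p⁻¹ℤ_p ∖ ℤ_p` for some `y ∈ L`. -/
def PrimTypeI (p : ℕ) [Fact p.Prime] (x : Fin 4 → ℤ_[p]) : Prop :=
  ParaPrimitive p x ∧ ∃ y : Fin 4 → ℤ_[p], ¬ ‖spPara p x y‖ ≤ 1

/-- A primitive element of type (II): `⟨x,y⟩ ∈ ℤ_p` for every `y ∈ L`. -/
def PrimTypeII (p : ℕ) [Fact p.Prime] (x : Fin 4 → ℤ_[p]) : Prop :=
  ParaPrimitive p x ∧ ∀ y : Fin 4 → ℤ_[p], ‖spPara p x y‖ ≤ 1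

/-- Any vector with vanishing first and last coordinates pairs integrally with all of `L`. -/
lemma spPara_norm_le_one_of_ends_zero (p : ℕ) [Fact p.Prime] (y : Fin 4 → ℤ_[p])
    (h0 : y 0 = 0) (h3 : y 3 = 0) (z : Fin 4 → ℤ_[p]) : ‖spPara p y z‖ ≤ 1 := by
  have : spPara p y z = ((y 1 * z 2 - y 2 * z 1 : ℤ_[p]) : ℚ_[p]) := by
    simp [spPara, h0, h3]
  rw [this, ← PadicInt.norm_def]
  exact PadicInt.norm_le_one _

/-- For a type (II) element, the first coordinate is divisible by `p`. -/
lemma typeII_dvd_zero (p : ℕ) [Fact p.Prime] (x : Fin 4 → ℤ_[p]) (hx : PrimTypeII p x) :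
    (p : ℤ_[p]) ∣ x 0 := by
  have h := hx.2 ![0, 0, 0, 1]
  have he : spPara p x ![0, 0, 0, 1] = ((x 0 : ℤ_[p]) : ℚ_[p]) / (p : ℚ_[p]) := by
    simp [spPara]
  rw [he] at h
  rw [norm_div, Padic.norm_p, div_eq_mul_inv, inv_inv] at h
  rw [← PadicInt.norm_lt_one_iff_dvd]
  have hp1 : (1 : ℝ) < (p : ℝ) := by exact_mod_cast (Fact.out : p.Prime).one_lt
  have hnn : (0:ℝ) ≤ ‖((x 0 : ℤ_[p]) : ℚ_[p])‖ := norm_nonneg _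
  calc ‖x 0‖ = ‖((x 0 : ℤ_[p]) : ℚ_[p])‖ := PadicInt.norm_def
    _ < 1 := by nlinarith

/-- For a type (II) element, the last coordinate is divisible by `p`. -/
lemma typeII_dvd_three (p : ℕ) [Fact p.Prime] (x : Fin 4 → ℤ_[p]) (hx : PrimTypeII p x) :
    (p : ℤ_[p]) ∣ x 3 := by
  have h := hx.2 ![1, 0, 0, 0]
  have he : spPara p x ![1, 0, 0, 0] = -(((x 3 : ℤ_[p]) : ℚ_[p]) / (p : ℚ_[p])) := by
    simp [spPara]
  rw [he, norm_neg, norm_div, Padic.norm_p, div_eq_mul_inv, inv_inv] at h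
  rw [← PadicInt.norm_lt_one_iff_dvd]
  have hp1 : (1 : ℝ) < (p : ℝ) := by exact_mod_cast (Fact.out : p.Prime).one_lt
  have hnn : (0:ℝ) ≤ ‖((x 3 : ℤ_[p]) : ℚ_[p])‖ := norm_nonneg _
  calc ‖x 3‖ = ‖((x 3 : ℤ_[p]) : ℚ_[p])‖ := PadicInt.norm_def
    _ < 1 := by nlinarith

/-- For every primitive element `x ∈ L` of type (II) there exists a primitive element
`y ∈ L` of type (II) with `⟨x,y⟩ = 1`. -/
theorem typeII_exists_dual_typeII
    (p : ℕ) [Fact p.Prime] (x : Fin 4 → ℤ_[p]) (hx : PrimTypeII p x) :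
    ∃ y : Fin 4 → ℤ_[p], PrimTypeII p y ∧ spPara p x y = 1 := by
  have hcase : IsUnit (x 1) ∨ IsUnit (x 2) := by
    by_contra hcon
    push_neg at hcon
    apply hx.1
    intro i
    fin_cases i
    · exact typeII_dvd_zero p x hx
    · rw [← PadicInt.norm_lt_one_iff_dvd, ← PadicInt.not_isUnit_iff]; exact hcon.1
    · rw [← PadicInt.norm_lt_one_iff_dvd, ← PadicInt.not_isUnit_iff]; exact hcon.2
    · exact typeII_dvd_three p x hx
  rcases hcase with h1 | h2
  · obtain ⟨u, hu⟩ := h1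
    refine ⟨![0, 0, (↑u⁻¹ : ℤ_[p]), 0], ⟨?_, spPara_norm_le_one_of_ends_zero p _ rfl rfl⟩, ?_⟩
    · intro hall
      have := hall 2
      simp only [Matrix.cons_val_two, Matrix.tail_cons, Matrix.head_cons] at this
      have : IsUnit (p : ℤ_[p]) := isUnit_of_dvd_unit this u⁻¹.isUnit
      rw [PadicInt.isUnit_iff, PadicInt.norm_p] at this
      have hp1 : (1 : ℝ) < (p : ℝ) := by exact_mod_cast (Fact.out : p.Prime).one_lt
      rw [inv_eq_one] at this
      linarith
    · have : x 1 * (↑u⁻¹ : ℤ_[p]) = 1 := by rw [← hu]; exact u.mul_inv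
      simp [spPara, this]
  · obtain ⟨u, hu⟩ := h2
    refine ⟨![0, -(↑u⁻¹ : ℤ_[p]), 0, 0], ⟨?_, spPara_norm_le_one_of_ends_zero p _ rfl rfl⟩, ?_⟩
    · intro hall
      have := hall 1
      simp only [Matrix.cons_val_one, Matrix.head_cons, Matrix.cons_val_zero, dvd_neg] at this
      have : IsUnit (p : ℤ_[p]) := isUnit_of_dvd_unit this u⁻¹.isUnit
      rw [PadicInt.isUnit_iff, PadicInt.norm_p] at this
      have hp1 : (1 : ℝ) < (p : ℝ) := by exact_mod_cast (Fact.out : p.Prime).one_lt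
      rw [inv_eq_one] at this
      linarith
    · have : x 2 * (↑u⁻¹ : ℤ_[p]) = 1 := by rw [← hu]; exact u.mul_inv
      simp [spPara, mul_neg, this]
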